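/- arXiv:1203.1850 — 3 statements merged into one kernel-verified Lean document; each statement's English description precedes it below -/
import Mathlib

section
/- (Hunter bound / second-order Bonferroni inequality for a path-like selection) For events E_1, ..., E_M and any choice of indices π̂_i ∈ {1, ..., i−1} for each i = 2, ..., M, the probability of the union of the E_i is at most the sum of P(E_i) minus the sum over i from 2 to M of P(E_i ∩ E_{π̂_i}). -/
open MeasureTheory Finset

/-- Hunter bound / second-order Bonferroni inequality for a path-like selection
of indices `π i < i`. -/
theorem hunter_bound
    {Ω : Type*} [MeasurableSpace Ω] (μ : Measure Ω) [IsProbabilityMeasure μ]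
    {M : ℕ} (hM : 1 ≤ M) (E : Fin M → Set Ω) (hE : ∀ i, MeasurableSet (E i))
    (π : Fin M → Fin M) (hπ : ∀ i : Fin M, 0 < (i : ℕ) → π i < i) :
    (μ (⋃ i, E i)).toReal ≤
      (∑ i : Fin M, (μ (E i)).toReal) -
        ∑ i ∈ Finset.univ.filter (fun i : Fin M => 0 < (i : ℕ)),
          (μ (E i ∩ E (π i))).toReal := by
  classical
  haveI : NeZero M := ⟨by omega⟩
  set F : Fin M → Set Ω := fun i => if (i : ℕ) = 0 then E i else E i \ E (π i) with hF
  have hsub : (⋃ i, E i) ⊆ ⋃ i, F i := by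
    intro ω hω
    simp only [Set.mem_iUnion] at hω ⊢
    obtain ⟨i, hi⟩ := hω
    obtain ⟨j, hj, hmin⟩ := Finset.exists_min_image
      (Finset.univ.filter fun k => ω ∈ E k) id ⟨i, by simp [hi]⟩
    simp only [Finset.mem_filter] at hj
    refine ⟨j, ?_⟩
    by_cases hj0 : (j : ℕ) = 0
    · rw [hF]; simp only [if_pos hj0]; exact hj.2
    · have hπj : π j < j := hπ j (Nat.pos_of_ne_zero hj0)
      have hnot : ω ∉ E (π j) := fun h =>
        absurd (hmin (π j) (by simp [h])) (not_le.mpr hπj)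
      rw [hF]; simp only [if_neg hj0]; exact ⟨hj.2, hnot⟩
  have key : μ (⋃ i, E i) ≤ ∑ i, μ (F i) := by
    refine (measure_mono hsub).trans ?_
    simpa [tsum_fintype] using measure_iUnion_le (μ := μ) F
  have hfin : ∀ s : Set Ω, μ s ≠ ⊤ := fun s => measure_ne_top μ s
  have h1 : (μ (⋃ i, E i)).toReal ≤ ∑ i, (μ (F i)).toReal := by
    rw [← ENNReal.toReal_sum (fun i _ => hfin _)]
    exact ENNReal.toReal_mono (ENNReal.sum_ne_top.mpr fun i _ => hfin _) key
  have hsplit : ∀ g : Fin M → ℝ, ∑ i, g i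
      = g 0 + ∑ i ∈ Finset.univ.filter (fun i : Fin M => 0 < (i : ℕ)), g i := by
    intro g
    rw [← Finset.sum_filter_add_sum_filter_not Finset.univ
      (fun i : Fin M => 0 < (i : ℕ)) g, add_comm]
    congr 1
    have h0 : Finset.univ.filter (fun i : Fin M => ¬ 0 < (i : ℕ)) = {0} := by
      ext k
      simp [Nat.pos_iff_ne_zero]
    rw [h0, Finset.sum_singleton]
  have hdiff : ∀ i ∈ Finset.univ.filter (fun i : Fin M => 0 < (i : ℕ)),
      (μ (F i)).toReal = (μ (E i)).toReal - (μ (E i ∩ E (π i))).toReal := by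
    intro i hi
    simp only [Finset.mem_filter] at hi
    have hi0 : (i : ℕ) ≠ 0 := Nat.pos_iff_ne_zero.mp hi.2
    have hm : μ (E i ∩ E (π i)) + μ (E i \ E (π i)) = μ (E i) :=
      measure_inter_add_diff (E i) (hE (π i))
    have := congrArg ENNReal.toReal hm
    rw [ENNReal.toReal_add (hfin _) (hfin _)] at this
    simp only [hF, if_neg hi0]
    linarith
  have hF0 : F 0 = E 0 := by simp [hF]
  calc (μ (⋃ i, E i)).toReal ≤ ∑ i, (μ (F i)).toReal := h1
    _ = (μ (F 0)).toReal
        + ∑ i ∈ Finset.univ.filter (fun i : Fin M => 0 < (i : ℕ)), (μ (F i)).toReal :=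
      hsplit _
    _ = (μ (E 0)).toReal
        + ∑ i ∈ Finset.univ.filter (fun i : Fin M => 0 < (i : ℕ)),
          ((μ (E i)).toReal - (μ (E i ∩ E (π i))).toReal) := by
      rw [hF0, Finset.sum_congr rfl hdiff]
    _ = (∑ i : Fin M, (μ (E i)).toReal) -
        ∑ i ∈ Finset.univ.filter (fun i : Fin M => 0 < (i : ℕ)),
          (μ (E i ∩ E (π i))).toReal := by
      rw [Finset.sum_sub_distrib, hsplit (fun i => (μ (E i)).toReal)]
      ring
end

section
/- Let ξ = (ξ_1, ξ_2) be a standard bivariate Gaussian vector with independent N(0, σ²) components. Let H_1 = {ξ : ⟨ξ, u⟩ ≥ r_1} and H_2 = {ξ : ⟨ξ, v⟩ ≥ r_2} be two half-planes determined by unit vectors u, v at angle θ ∈ [0, π] and distances 0 ≤ r_1 ≤ r_2. Then P(H_1 ∪ H_2) ≤ Q(r_1/σ) + (θ/(2π))·exp(−r_2²/(2σ²)). -/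
open MeasureTheory ProbabilityTheory

noncomputable def gaussianQ (x : ℝ) : ℝ :=
  (1 / Real.sqrt (2 * Real.pi)) * ∫ t in Set.Ici x, Real.exp (-t ^ 2 / 2)

open Set Real Filter
open scoped ENNReal NNReal

/-- Lebesgue-integral change of variables for polar coordinates. -/
theorem lintegral_polar (g : ℝ × ℝ → ℝ≥0∞) :
    ∫⁻ p, g p = ∫⁻ p in polarCoord.target, ENNReal.ofReal p.1 * g (polarCoord.symm p) := by
  set B : ℝ × ℝ → ℝ × ℝ →L[ℝ] ℝ × ℝ := fun p =>
    LinearMap.toContinuousLinearMap (Matrix.toLin (Module.Basis.finTwoProd ℝ) (Module.Basis.finTwoProd ℝ)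
      !![cos p.2, -p.1 * sin p.2; sin p.2, p.1 * cos p.2]) with hB
  have A : ∀ p ∈ polarCoord.target, HasFDerivWithinAt polarCoord.symm (B p) polarCoord.target p :=
    fun p _ => (hasFDerivAt_polarCoord_symm p).hasFDerivWithinAt
  have B_det : ∀ p, (B p).det = p.1 := by
    intro p
    conv_rhs => rw [← one_mul p.1, ← cos_sq_add_sin_sq p.2]
    simp only [hB, neg_mul, LinearMap.det_toContinuousLinearMap, LinearMap.det_toLin,
      Matrix.det_fin_two_of, sub_neg_eq_add]
    ring
  have hinj : Set.InjOn polarCoord.symm polarCoord.target := by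
    have := polarCoord.symm.injOn
    rwa [OpenPartialHomeomorph.symm_source] at this
  have hmeas : MeasurableSet polarCoord.target := polarCoord.open_target.measurableSet
  calc ∫⁻ p, g p = ∫⁻ p in polarCoord.source, g p := by
        rw [← setLIntegral_univ]
        exact setLIntegral_congr polarCoord_source_ae_eq_univ.symm
    _ = ∫⁻ p in polarCoord.symm '' polarCoord.target, g p := by
        rw [polarCoord.symm_image_target_eq_source]
    _ = ∫⁻ p in polarCoord.target, ENNReal.ofReal |(B p).det| * g (polarCoord.symm p) :=
        lintegral_image_eq_lintegral_abs_det_fderiv_mul volume hmeas A hinj g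
    _ = ∫⁻ p in polarCoord.target, ENNReal.ofReal p.1 * g (polarCoord.symm p) := by
        refine setLIntegral_congr_fun hmeas (fun p hp => ?_)
        rw [B_det, abs_of_pos hp.1]

/-- A rotation (possibly composed with a reflection) preserves Lebesgue measure on `ℝ × ℝ`. -/
theorem measurePreserving_rot (a b ε : ℝ) (h : a ^ 2 + b ^ 2 = 1) (hε : ε = 1 ∨ ε = -1) :
    MeasurePreserving (fun p : ℝ × ℝ => (a * p.1 + b * p.2, ε * (-b * p.1 + a * p.2)))
      volume volume := by
  set T : ℝ × ℝ →ₗ[ℝ] ℝ × ℝ :=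
    Matrix.toLin (Module.Basis.finTwoProd ℝ) (Module.Basis.finTwoProd ℝ) !![a, b; -(ε * b), ε * a] with hT
  have hTfun : (fun p : ℝ × ℝ => (a * p.1 + b * p.2, ε * (-b * p.1 + a * p.2))) = ⇑T := by
    funext p
    simp [hT, Matrix.toLin_finTwoProd_apply]
    ring_nf
  have hdet : LinearMap.det T = ε := by
    rw [hT, LinearMap.det_toLin, Matrix.det_fin_two_of]
    rcases hε with rfl | rfl <;> nlinarith
  have hdet1 : |(LinearMap.det T)⁻¹| = 1 := by
    rw [hdet]; rcases hε with rfl | rfl <;> norm_num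
  constructor
  · rw [hTfun]; exact T.continuous_of_finiteDimensional.measurable
  · rw [hTfun, Measure.map_linearMap_addHaar_eq_smul_addHaar _
      (by rw [hdet]; rcases hε with rfl | rfl <;> norm_num), hdet1]
    simp

/-- Product of two `withDensity` measures. -/
theorem withDensity_prod_eq (f g : ℝ → ℝ≥0∞) (hf : Measurable f) (hg : Measurable g) :
    (volume.withDensity f).prod (volume.withDensity g)
      = (volume : Measure (ℝ × ℝ)).withDensity (fun p => f p.1 * g p.2) := by
  have hfg : Measurable fun p : ℝ × ℝ => f p.1 * g p.2 :=
    (hf.comp measurable_fst).mul (hg.comp measurable_snd)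
  ext A hA
  have hmeas : Measurable fun x => (volume.withDensity g) (Prod.mk x ⁻¹' A) :=
    measurable_measure_prodMk_left hA
  calc ((volume.withDensity f).prod (volume.withDensity g)) A
      = ∫⁻ x, (volume.withDensity g) (Prod.mk x ⁻¹' A) ∂(volume.withDensity f) :=
        Measure.prod_apply hA
    _ = ∫⁻ x, f x * (volume.withDensity g) (Prod.mk x ⁻¹' A) :=
        lintegral_withDensity_eq_lintegral_mul volume hf hmeas
    _ = ∫⁻ x, ∫⁻ y, A.indicator (fun p : ℝ × ℝ => f p.1 * g p.2) (x, y) := by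
        refine lintegral_congr fun x => ?_
        rw [withDensity_apply _ (measurable_prodMk_left hA),
          ← lintegral_indicator (measurable_prodMk_left hA) _, ← lintegral_const_mul _
          (hg.indicator (measurable_prodMk_left hA))]
        refine lintegral_congr fun y => ?_
        by_cases hxy : (x, y) ∈ A
        · simp [Set.indicator_of_mem, hxy, Set.indicator_of_mem (Set.mem_preimage.mpr hxy)]
        · simp [Set.indicator_of_notMem, hxy, Set.indicator_of_notMem
            (fun hc => hxy (Set.mem_preimage.mp hc))]
    _ = ((volume : Measure (ℝ × ℝ)).withDensity (fun p => f p.1 * g p.2)) A := by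
        rw [withDensity_apply _ hA, ← lintegral_indicator hA _, Measure.volume_eq_prod,
          lintegral_prod _ (hfg.indicator hA).aemeasurable]

/-- A measure with a `T`-invariant density is `T`-invariant. -/
theorem withDensity_preimage_eq (D : ℝ × ℝ → ℝ≥0∞) (hD : Measurable D)
    {T : ℝ × ℝ → ℝ × ℝ} (hT : MeasurePreserving T volume volume)
    (hDT : ∀ x, D (T x) = D x) {A : Set (ℝ × ℝ)} (hA : MeasurableSet A) :
    (volume.withDensity D) (T ⁻¹' A) = (volume.withDensity D) A := by
  rw [withDensity_apply _ (hT.measurable hA), withDensity_apply _ hA,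
    ← lintegral_indicator (hT.measurable hA) _, ← lintegral_indicator hA _,
    ← hT.lintegral_comp (hD.indicator hA)]
  refine lintegral_congr fun x => ?_
  by_cases hx : T x ∈ A
  · simp [Set.indicator_of_mem hx, Set.indicator_of_mem (Set.mem_preimage.mpr hx), hDT x]
  · simp [Set.indicator_of_notMem hx,
      Set.indicator_of_notMem (fun hc => hx (Set.mem_preimage.mp hc))]

/-- The angular section of the wedge has measure at most `θ`, and is empty for `ρ < r₂`. -/
theorem section_bound {θ r₁ r₂ ρ : ℝ} (hθ0 : 0 ≤ θ) (hθπ : θ ≤ π) (hr₁ : 0 ≤ r₁)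
    (h12 : r₁ ≤ r₂) (hρ : 0 < ρ) :
    volume ({φ : ℝ | r₂ ≤ ρ * (Real.cos φ * Real.cos θ + Real.sin φ * Real.sin θ) ∧
        ρ * Real.cos φ < r₁} ∩ Ioo (-π) π)
      ≤ (Ici r₂).indicator (fun _ => ENNReal.ofReal θ) ρ := by
  set S := {φ : ℝ | r₂ ≤ ρ * (Real.cos φ * Real.cos θ + Real.sin φ * Real.sin θ) ∧
        ρ * Real.cos φ < r₁} ∩ Ioo (-π) π with hS
  have hcs : ∀ φ : ℝ, Real.cos φ * Real.cos θ + Real.sin φ * Real.sin θ = Real.cos (φ - θ) := by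
    intro φ; rw [Real.cos_sub]
  by_cases hρ₂ : r₂ ≤ ρ
  · -- main case
    rw [Set.indicator_of_mem (mem_Ici.mpr hρ₂)]
    set c := r₂ / ρ with hc
    set γ := Real.arccos c with hγ
    have hc0 : 0 ≤ c := div_nonneg (hr₁.trans h12) hρ.le
    have hc1 : c ≤ 1 := (div_le_one hρ).mpr hρ₂
    have hcosγ : Real.cos γ = c := Real.cos_arccos (by linarith) hc1
    have hγ0 : 0 ≤ γ := Real.arccos_nonneg c
    have hγπ : γ ≤ π := Real.arccos_le_pi c
    have hsub : S ⊆ Ioc γ (min (γ + θ) π) ∪ Ioc (-π) (γ + θ - 2 * π) := by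
      rintro φ ⟨⟨h2, h3⟩, hφ1, hφ2⟩
      rw [hcs φ] at h2
      have h2' : Real.cos γ ≤ Real.cos (φ - θ) := by
        rw [hcosγ, hc]; rw [div_le_iff₀ hρ]; linarith [h2]
      have h3' : Real.cos φ < Real.cos γ := by
        rw [hcosγ, hc]
        calc Real.cos φ < r₁ / ρ := by rw [lt_div_iff₀ hρ]; linarith
          _ ≤ r₂ / ρ := by gcongr
      have hnot : ¬ (-γ ≤ φ ∧ φ ≤ γ) := by
        rintro ⟨hl, hr⟩
        have habs : |φ| ≤ γ := abs_le.mpr ⟨by linarith, hr⟩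
        have : Real.cos γ ≤ Real.cos |φ| :=
          Real.cos_le_cos_of_nonneg_of_le_pi (abs_nonneg φ) hγπ habs
        rw [Real.cos_abs] at this
        linarith
      by_cases hψ : -π ≤ φ - θ
      · -- φ - θ ∈ [-π, π]
        have habs : |φ - θ| ≤ γ := by
          by_contra habs
          push_neg at habs
          have h1 : |φ - θ| ≤ π := abs_le.mpr ⟨by linarith, by linarith⟩
          have := Real.cos_lt_cos_of_nonneg_of_le_pi hγ0 h1 habs
          rw [Real.cos_abs] at this
          linarith
        rw [abs_le] at habs
        left
        constructor
        · by_contra hle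
          push_neg at hle
          exact hnot ⟨by linarith [habs.1], hle⟩
        · exact le_min (by linarith [habs.2]) hφ2.le
      · -- φ - θ < -π
        push_neg at hψ
        have h2pi : 0 < φ - θ + 2 * π := by
          have := Real.pi_pos; linarith
        have hlt : φ - θ + 2 * π < π := by linarith
        have hcos2 : Real.cos (φ - θ + 2 * π) = Real.cos (φ - θ) := Real.cos_add_two_pi _
        have hle : φ - θ + 2 * π ≤ γ := by
          by_contra habs
          push_neg at habs
          have := Real.cos_lt_cos_of_nonneg_of_le_pi hγ0 hlt.le habs
          rw [hcos2] at this
          linarith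
        right
        exact ⟨hφ1, by linarith⟩
    calc volume S ≤ volume (Ioc γ (min (γ + θ) π) ∪ Ioc (-π) (γ + θ - 2 * π)) :=
          measure_mono hsub
      _ ≤ volume (Ioc γ (min (γ + θ) π)) + volume (Ioc (-π) (γ + θ - 2 * π)) :=
          measure_union_le _ _
      _ ≤ ENNReal.ofReal θ := by
          rw [Real.volume_Ioc, Real.volume_Ioc]
          rcases le_total (γ + θ) π with hmin | hmin
          · rw [min_eq_left hmin]
            have : γ + θ - 2 * π - -π ≤ 0 := by linarith
            rw [ENNReal.ofReal_eq_zero.mpr this, add_zero]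
            apply ENNReal.ofReal_le_ofReal; linarith
          · rw [min_eq_right hmin, ← ENNReal.ofReal_add (by linarith) (by linarith)]
            apply ENNReal.ofReal_le_ofReal; linarith
  · -- ρ < r₂ : empty section
    push_neg at hρ₂
    rw [Set.indicator_of_notMem (by simpa using hρ₂.not_ge)]
    have hempty : S = ∅ := by
      rw [hS, Set.eq_empty_iff_forall_notMem]
      rintro φ ⟨⟨h2, _⟩, _⟩
      rw [hcs φ] at h2
      have : ρ * Real.cos (φ - θ) ≤ ρ * 1 :=
        mul_le_mul_of_nonneg_left (Real.cos_le_one _) hρ.le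
      linarith
    simp [hempty]

theorem rho_hasDerivAt (σ : ℝ) (hσ : 0 < σ) (x : ℝ) :
    HasDerivAt (fun ρ => -σ ^ 2 * Real.exp (-ρ ^ 2 / (2 * σ ^ 2)))
      (x * Real.exp (-x ^ 2 / (2 * σ ^ 2))) x := by
  have h1 : HasDerivAt (fun ρ : ℝ => -ρ ^ 2 / (2 * σ ^ 2)) (-2 * x / (2 * σ ^ 2)) x := by
    have := ((hasDerivAt_pow 2 x).neg).div_const (2 * σ ^ 2)
    simpa using this
  have h2 := (h1.exp).const_mul (-σ ^ 2)
  refine h2.congr_deriv ?_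
  field_simp

theorem rho_tendsto (σ : ℝ) (hσ : 0 < σ) :
    Tendsto (fun ρ => -σ ^ 2 * Real.exp (-ρ ^ 2 / (2 * σ ^ 2))) atTop (nhds 0) := by
  have h1 : Tendsto (fun ρ : ℝ => -ρ ^ 2 / (2 * σ ^ 2)) atTop atBot := by
    apply Tendsto.atBot_div_const (by positivity)
    exact tendsto_neg_atBot_iff.mpr (tendsto_pow_atTop (by norm_num))
  have := (Real.tendsto_exp_atBot.comp h1).const_mul (-σ ^ 2)
  simpa using this

theorem integrable_rho (σ r : ℝ) (hσ : 0 < σ) :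
    IntegrableOn (fun ρ => ρ * Real.exp (-ρ ^ 2 / (2 * σ ^ 2))) (Ici r) volume := by
  rw [integrableOn_Ici_iff_integrableOn_Ioi]
  by_cases hr : 0 ≤ r
  · apply integrableOn_Ioi_deriv_of_nonneg' (fun x _ => rho_hasDerivAt σ hσ x)
      (fun x hx => mul_nonneg (hr.trans (mem_Ioi.mp hx).le) (Real.exp_pos _).le)
      (rho_tendsto σ hσ)
  · push_neg at hr
    have h1 : IntegrableOn (fun ρ => ρ * Real.exp (-ρ ^ 2 / (2 * σ ^ 2))) (Ioi 0) volume :=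
      integrableOn_Ioi_deriv_of_nonneg' (fun x _ => rho_hasDerivAt σ hσ x)
        (fun x hx => mul_nonneg (mem_Ioi.mp hx).le (Real.exp_pos _).le) (rho_tendsto σ hσ)
    have h2 : IntegrableOn (fun ρ => ρ * Real.exp (-ρ ^ 2 / (2 * σ ^ 2))) (Ioc r 0) volume := by
      exact ((Continuous.continuousOn (by continuity)).integrableOn_compact
        (isCompact_Icc (a := r) (b := 0))).mono_set Ioc_subset_Icc_self
    have := h2.union h1
    apply this.mono_set
    intro x hx
    rcases le_or_gt x 0 with h | h
    · exact Or.inl ⟨hx, h⟩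
    · exact Or.inr h

theorem integral_rho (σ r : ℝ) (hσ : 0 < σ) :
    ∫ ρ in Ici r, ρ * Real.exp (-ρ ^ 2 / (2 * σ ^ 2))
      = σ ^ 2 * Real.exp (-r ^ 2 / (2 * σ ^ 2)) := by
  rw [MeasureTheory.integral_Ici_eq_integral_Ioi,
    integral_Ioi_of_hasDerivAt_of_tendsto' (fun x _ => rho_hasDerivAt σ hσ x)
      ((integrable_rho σ r hσ).mono_set Ioi_subset_Ici_self) (rho_tendsto σ hσ)]
  ring

theorem gaussianQ_nonneg (x : ℝ) : 0 ≤ gaussianQ x := by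
  apply mul_nonneg (by positivity)
  exact integral_nonneg fun t => (Real.exp_pos _).le

theorem gauss_tail (σ r : ℝ) (hσ : 0 < σ) :
    (gaussianReal 0 (σ ^ 2).toNNReal) (Ici r) = ENNReal.ofReal (gaussianQ (r / σ)) := by
  have hV : (σ ^ 2).toNNReal ≠ 0 := by
    simp only [ne_eq, Real.toNNReal_eq_zero, not_le]
    positivity
  have hVcoe : ((σ ^ 2).toNNReal : ℝ) = σ ^ 2 := Real.coe_toNNReal _ (sq_nonneg σ)
  rw [gaussianReal_apply_eq_integral 0 hV (Ici r)]
  congr 1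
  have hpdf : ∀ x : ℝ, gaussianPDFReal 0 (σ ^ 2).toNNReal x
      = (Real.sqrt (2 * π) * σ)⁻¹ * Real.exp (-x ^ 2 / (2 * σ ^ 2)) := by
    intro x
    rw [gaussianPDFReal]
    rw [hVcoe]
    rw [show 2 * π * σ ^ 2 = (2 * π) * σ ^ 2 by ring, Real.sqrt_mul (by positivity),
      Real.sqrt_sq hσ.le]
    ring_nf
  calc ∫ x in Ici r, gaussianPDFReal 0 (σ ^ 2).toNNReal x
      = (Real.sqrt (2 * π) * σ)⁻¹ * ∫ x in Ici r, Real.exp (-x ^ 2 / (2 * σ ^ 2)) := by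
        rw [← MeasureTheory.integral_const_mul]
        exact setIntegral_congr_fun measurableSet_Ici fun x _ => hpdf x
    _ = (Real.sqrt (2 * π) * σ)⁻¹ * (σ * ∫ t in Ici (r / σ), Real.exp (-t ^ 2 / 2)) := by
        congr 1
        rw [MeasureTheory.integral_Ici_eq_integral_Ioi,
          MeasureTheory.integral_Ici_eq_integral_Ioi]
        have hthis := integral_comp_mul_left_Ioi
          (fun x => Real.exp (-x ^ 2 / (2 * σ ^ 2))) (r / σ) hσ
        rw [mul_div_cancel₀ _ hσ.ne'] at hthis
        have heq : ∀ x : ℝ, Real.exp (-(σ * x) ^ 2 / (2 * σ ^ 2)) = Real.exp (-x ^ 2 / 2) := by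
          intro x
          congr 1
          field_simp
        simp only [heq] at hthis
        rw [hthis, smul_eq_mul, ← mul_assoc, mul_inv_cancel₀ hσ.ne', one_mul]
    _ = gaussianQ (r / σ) := by
        rw [gaussianQ]
        rw [show (Real.sqrt (2 * π) * σ)⁻¹ * (σ * ∫ t in Ici (r / σ), Real.exp (-t ^ 2 / 2))
          = (σ⁻¹ * σ) * ((Real.sqrt (2 * π))⁻¹ * ∫ t in Ici (r / σ), Real.exp (-t ^ 2 / 2)) by
            rw [mul_inv]; ring]
        rw [inv_mul_cancel₀ hσ.ne', one_mul, one_div]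

/-- Union of two half-planes for an isotropic bivariate Gaussian:
`P(H₁ ∪ H₂) ≤ Q(r₁/σ) + (θ/(2π)) exp(−r₂²/(2σ²))`. -/
theorem halfplane_union_bound
    (σ : ℝ) (hσ : 0 < σ)
    (u v : ℝ × ℝ) (hu : u.1 ^ 2 + u.2 ^ 2 = 1) (hv : v.1 ^ 2 + v.2 ^ 2 = 1)
    (θ : ℝ) (hθ : θ ∈ Set.Icc 0 Real.pi)
    (hcos : Real.cos θ = u.1 * v.1 + u.2 * v.2)
    (r₁ r₂ : ℝ) (hr₁ : 0 ≤ r₁) (hr₁₂ : r₁ ≤ r₂)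
    (P : Measure (ℝ × ℝ))
    (hP : P = (gaussianReal 0 (σ ^ 2).toNNReal).prod
              (gaussianReal 0 (σ ^ 2).toNNReal)) :
    (P ({x : ℝ × ℝ | x.1 * u.1 + x.2 * u.2 ≥ r₁} ∪
        {x : ℝ × ℝ | x.1 * v.1 + x.2 * v.2 ≥ r₂})).toReal ≤
      gaussianQ (r₁ / σ) + θ / (2 * Real.pi) * Real.exp (-(r₂ ^ 2) / (2 * σ ^ 2)) := by
  subst hP
  obtain ⟨hθ0, hθπ⟩ := hθ
  have hV : (σ ^ 2).toNNReal ≠ 0 := by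
    simp only [ne_eq, Real.toNNReal_eq_zero, not_le]; positivity
  have hVcoe : ((σ ^ 2).toNNReal : ℝ) = σ ^ 2 := Real.coe_toNNReal _ (sq_nonneg σ)
  have hπ : (0:ℝ) < π := Real.pi_pos
  -- density
  set D : ℝ × ℝ → ℝ≥0∞ := fun p =>
    gaussianPDF 0 (σ ^ 2).toNNReal p.1 * gaussianPDF 0 (σ ^ 2).toNNReal p.2 with hD
  have hDmeas : Measurable D :=
    ((measurable_gaussianPDF _ _).comp measurable_fst).mul
      ((measurable_gaussianPDF _ _).comp measurable_snd)
  have hPD : (gaussianReal 0 (σ ^ 2).toNNReal).prod (gaussianReal 0 (σ ^ 2).toNNReal)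
      = volume.withDensity D := by
    rw [gaussianReal_of_var_ne_zero 0 hV,
      withDensity_prod_eq _ _ (measurable_gaussianPDF _ _) (measurable_gaussianPDF _ _)]
  have hDval : ∀ p : ℝ × ℝ, D p = ENNReal.ofReal
      ((2 * π * σ ^ 2)⁻¹ * Real.exp (-(p.1 ^ 2 + p.2 ^ 2) / (2 * σ ^ 2))) := by
    intro p
    rw [hD]
    simp only [gaussianPDF, gaussianPDFReal, hVcoe, sub_zero]
    rw [← ENNReal.ofReal_mul (by positivity)]
    congr 1
    rw [mul_mul_mul_comm, ← mul_inv, Real.mul_self_sqrt (by positivity), ← Real.exp_add]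
    congr 1
    ring
  -- rotation
  set s := u.1 * v.2 - u.2 * v.1 with hs
  have hs2 : s ^ 2 = Real.sin θ ^ 2 := by
    have h1 : Real.sin θ ^ 2 = 1 - Real.cos θ ^ 2 := Real.sin_sq θ
    rw [h1, hcos, hs]
    linear_combination (v.1 ^ 2 + v.2 ^ 2) * hu + hv
  obtain ⟨ε, hε, hεs⟩ : ∃ ε : ℝ, (ε = 1 ∨ ε = -1) ∧ ε * s = Real.sin θ := by
    have hfac : (s - Real.sin θ) * (s + Real.sin θ) = 0 := by linear_combination hs2
    rcases mul_eq_zero.mp hfac with h | h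
    · exact ⟨1, Or.inl rfl, by rw [one_mul]; linarith⟩
    · exact ⟨-1, Or.inr rfl, by linarith⟩
  set T : ℝ × ℝ → ℝ × ℝ :=
    fun p => (u.1 * p.1 + u.2 * p.2, ε * (-u.2 * p.1 + u.1 * p.2)) with hT
  have hTmp : MeasurePreserving T volume volume := measurePreserving_rot u.1 u.2 ε hu hε
  have hε2 : ε * ε = 1 := by rcases hε with rfl | rfl <;> norm_num
  have idU : ∀ p : ℝ × ℝ, p.1 * u.1 + p.2 * u.2 = (T p).1 := fun p => by
    simp only [hT]; ring
  have idV : ∀ p : ℝ × ℝ,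
      p.1 * v.1 + p.2 * v.2 = (T p).1 * Real.cos θ + (T p).2 * Real.sin θ := by
    intro p
    simp only [hT, hcos, ← hεs, hs]
    linear_combination -(p.1 * v.1 + p.2 * v.2) * hu -
      ((-u.2 * p.1 + u.1 * p.2) * (u.1 * v.2 - u.2 * v.1)) * hε2
  have hnorm : ∀ p : ℝ × ℝ, (T p).1 ^ 2 + (T p).2 ^ 2 = p.1 ^ 2 + p.2 ^ 2 := by
    intro p
    simp only [hT]
    linear_combination (p.1 ^ 2 + p.2 ^ 2) * hu +
      ((-u.2 * p.1 + u.1 * p.2) ^ 2) * hε2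
  have hDT : ∀ p, D (T p) = D p := by
    intro p
    rw [hDval, hDval, hnorm p]
  -- sets
  set W₁ : Set (ℝ × ℝ) := {p | p.1 ≥ r₁} with hW₁def
  set W₂ : Set (ℝ × ℝ) := {p | p.1 * Real.cos θ + p.2 * Real.sin θ ≥ r₂} with hW₂def
  have hW₁ : MeasurableSet W₁ := measurableSet_le measurable_const measurable_fst
  have hW₂ : MeasurableSet W₂ := measurableSet_le measurable_const
    ((measurable_fst.mul_const _).add (measurable_snd.mul_const _))
  have hpre : ({x : ℝ × ℝ | x.1 * u.1 + x.2 * u.2 ≥ r₁} ∪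
      {x : ℝ × ℝ | x.1 * v.1 + x.2 * v.2 ≥ r₂}) = T ⁻¹' (W₁ ∪ W₂) := by
    ext p
    simp only [Set.mem_union, Set.mem_setOf_eq, Set.mem_preimage, hW₁def, hW₂def, ge_iff_le]
    rw [idU p, idV p]
  rw [hpre, hPD, withDensity_preimage_eq D hDmeas hTmp hDT (hW₁.union hW₂)]
  -- split union
  have hsplit : (volume.withDensity D) (W₁ ∪ W₂)
      ≤ (volume.withDensity D) W₁ + (volume.withDensity D) (W₂ \ W₁) := by
    calc (volume.withDensity D) (W₁ ∪ W₂) = (volume.withDensity D) (W₁ ∪ (W₂ \ W₁)) := by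
          rw [Set.union_diff_self]
      _ ≤ _ := measure_union_le _ _
  -- first term
  have h1 : (volume.withDensity D) W₁ = ENNReal.ofReal (gaussianQ (r₁ / σ)) := by
    rw [← hPD]
    have hWprod : W₁ = (Ici r₁) ×ˢ (univ : Set ℝ) := by
      ext p; simp [hW₁def, Set.mem_prod]
    rw [hWprod, Measure.prod_prod, measure_univ, mul_one, gauss_tail σ r₁ hσ]
  -- second term
  have h2 : (volume.withDensity D) (W₂ \ W₁) ≤ ENNReal.ofReal θ *
      ENNReal.ofReal ((2 * π)⁻¹ * Real.exp (-r₂ ^ 2 / (2 * σ ^ 2))) := by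
    have hWd : MeasurableSet (W₂ \ W₁) := hW₂.diff hW₁
    have hsymm : ∀ q : ℝ × ℝ, polarCoord.symm q = (q.1 * Real.cos q.2, q.1 * Real.sin q.2) :=
      fun q => rfl
    rw [withDensity_apply _ hWd, ← lintegral_indicator hWd _, lintegral_polar]
    have htarget : polarCoord.target = Ioi (0:ℝ) ×ˢ Ioo (-π) π := rfl
    have hintmeas : Measurable fun p : ℝ × ℝ =>
        ENNReal.ofReal p.1 * (W₂ \ W₁).indicator D (polarCoord.symm p) := by
      apply (measurable_fst.ennreal_ofReal).mul
      apply (hDmeas.indicator hWd).comp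
      have : Continuous fun p : ℝ × ℝ => (p.1 * Real.cos p.2, p.1 * Real.sin p.2) :=
        (continuous_fst.mul (Real.continuous_cos.comp continuous_snd)).prodMk
          (continuous_fst.mul (Real.continuous_sin.comp continuous_snd))
      exact (this.congr fun p => (hsymm p).symm).measurable
    rw [htarget, Measure.volume_eq_prod, ← Measure.prod_restrict,
      lintegral_prod _ hintmeas.aemeasurable]
    -- the bound function
    set g : ℝ → ℝ≥0∞ := fun ρ =>
      ENNReal.ofReal ((2 * π * σ ^ 2)⁻¹ * (ρ * Real.exp (-ρ ^ 2 / (2 * σ ^ 2)))) *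
        (Ici r₂).indicator (fun _ => ENNReal.ofReal θ) ρ with hg
    have hgmeas : Measurable g := by
      apply Measurable.mul
      · apply Measurable.ennreal_ofReal
        exact (measurable_id.mul ((measurable_id.pow_const 2).neg.div_const _).exp).const_mul _
      · exact (measurable_const.indicator measurableSet_Ici)
    have houter : ∫⁻ ρ in Ioi (0:ℝ), ∫⁻ φ in Ioo (-π) π,
        ENNReal.ofReal (ρ, φ).1 * (W₂ \ W₁).indicator D (polarCoord.symm (ρ, φ))
        ≤ ∫⁻ ρ in Ioi (0:ℝ), g ρ := by
      refine setLIntegral_mono hgmeas fun ρ hρ => ?_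
      have hρ0 : 0 < ρ := mem_Ioi.mp hρ
      set Sρ := {φ : ℝ | r₂ ≤ ρ * (Real.cos φ * Real.cos θ + Real.sin φ * Real.sin θ) ∧
          ρ * Real.cos φ < r₁} with hSρdef
      have hSρm : MeasurableSet Sρ := by
        apply MeasurableSet.inter
        · exact measurableSet_le measurable_const
            (((Real.measurable_cos.mul_const _).add (Real.measurable_sin.mul_const _)).const_mul ρ)
        · exact measurableSet_lt (Real.measurable_cos.const_mul ρ) measurable_const
      calc ∫⁻ φ in Ioo (-π) π,
            ENNReal.ofReal (ρ, φ).1 * (W₂ \ W₁).indicator D (polarCoord.symm (ρ, φ))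
          ≤ ∫⁻ φ in Ioo (-π) π, Sρ.indicator (fun _ =>
              ENNReal.ofReal ((2 * π * σ ^ 2)⁻¹ *
                (ρ * Real.exp (-ρ ^ 2 / (2 * σ ^ 2))))) φ := by
            refine lintegral_mono fun φ => ?_
            by_cases hmem : polarCoord.symm (ρ, φ) ∈ W₂ \ W₁
            · have hφS : φ ∈ Sρ := by
                obtain ⟨hw2, hw1⟩ := hmem
                rw [hW₂def, Set.mem_setOf_eq, hsymm] at hw2
                rw [hW₁def, Set.mem_setOf_eq, hsymm] at hw1
                constructor
                · refine le_trans hw2 (le_of_eq ?_)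
                  ring
                · exact lt_of_not_ge hw1
              rw [Set.indicator_of_mem hmem, Set.indicator_of_mem hφS, hDval, hsymm]
              have hρsq : (ρ * Real.cos φ) ^ 2 + (ρ * Real.sin φ) ^ 2 = ρ ^ 2 := by
                linear_combination ρ ^ 2 * Real.sin_sq_add_cos_sq φ
              simp only
              rw [hρsq, ← ENNReal.ofReal_mul hρ0.le]
              apply le_of_eq
              congr 1
              ring
            · rw [Set.indicator_of_notMem hmem, mul_zero]
              exact zero_le
        _ = ENNReal.ofReal ((2 * π * σ ^ 2)⁻¹ * (ρ * Real.exp (-ρ ^ 2 / (2 * σ ^ 2)))) *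
              volume (Sρ ∩ Ioo (-π) π) := by
            rw [lintegral_indicator_const hSρm, Measure.restrict_apply hSρm]
        _ ≤ g ρ := by
            rw [hg]
            exact mul_le_mul_right (section_bound hθ0 hθπ hr₁ hr₁₂ hρ0) _
    refine le_trans houter ?_
    -- compute the outer integral
    have hind : ∀ ρ : ℝ, g ρ = (Ici r₂).indicator (fun ρ' => ENNReal.ofReal θ *
        ENNReal.ofReal ((2 * π * σ ^ 2)⁻¹ * (ρ' * Real.exp (-ρ' ^ 2 / (2 * σ ^ 2))))) ρ := by
      intro ρ
      rw [hg]
      simp only [Set.indicator_apply]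
      by_cases hmem : ρ ∈ Ici r₂ <;> simp [hmem, mul_comm]
    calc ∫⁻ ρ in Ioi (0:ℝ), g ρ
        = ∫⁻ ρ in Ici r₂ ∩ Ioi 0, ENNReal.ofReal θ *
            ENNReal.ofReal ((2 * π * σ ^ 2)⁻¹ * (ρ * Real.exp (-ρ ^ 2 / (2 * σ ^ 2)))) := by
          simp only [hind]
          rw [lintegral_indicator measurableSet_Ici _, Measure.restrict_restrict measurableSet_Ici]
      _ ≤ ∫⁻ ρ in Ici r₂, ENNReal.ofReal θ *
            ENNReal.ofReal ((2 * π * σ ^ 2)⁻¹ * (ρ * Real.exp (-ρ ^ 2 / (2 * σ ^ 2)))) :=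
          lintegral_mono' (Measure.restrict_mono inter_subset_left le_rfl) le_rfl
      _ = ENNReal.ofReal θ * ∫⁻ ρ in Ici r₂,
            ENNReal.ofReal ((2 * π * σ ^ 2)⁻¹ * (ρ * Real.exp (-ρ ^ 2 / (2 * σ ^ 2)))) := by
          rw [lintegral_const_mul]
          apply Measurable.ennreal_ofReal
          exact (measurable_id.mul ((measurable_id.pow_const 2).neg.div_const _).exp).const_mul _
      _ ≤ ENNReal.ofReal θ *
            ENNReal.ofReal ((2 * π)⁻¹ * Real.exp (-r₂ ^ 2 / (2 * σ ^ 2))) := by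
          apply mul_le_mul_right
          have hint : IntegrableOn
              (fun ρ => (2 * π * σ ^ 2)⁻¹ * (ρ * Real.exp (-ρ ^ 2 / (2 * σ ^ 2))))
              (Ici r₂) volume := (integrable_rho σ r₂ hσ).const_mul _
          have hnn : 0 ≤ᵐ[volume.restrict (Ici r₂)]
              fun ρ => (2 * π * σ ^ 2)⁻¹ * (ρ * Real.exp (-ρ ^ 2 / (2 * σ ^ 2))) := by
            refine (ae_restrict_iff' measurableSet_Ici).mpr (Eventually.of_forall fun ρ hρ => ?_)
            have : 0 ≤ ρ := le_trans (hr₁.trans hr₁₂) hρ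
            positivity
          rw [← MeasureTheory.ofReal_integral_eq_lintegral_ofReal hint hnn]
          apply ENNReal.ofReal_le_ofReal
          rw [MeasureTheory.integral_const_mul, integral_rho σ r₂ hσ]
          apply le_of_eq
          field_simp
  -- combine
  have h2top : ENNReal.ofReal θ *
      ENNReal.ofReal ((2 * π)⁻¹ * Real.exp (-r₂ ^ 2 / (2 * σ ^ 2))) ≠ ⊤ :=
    ENNReal.mul_ne_top ENNReal.ofReal_ne_top ENNReal.ofReal_ne_top
  have hfin1 : (volume.withDensity D) W₁ ≠ ⊤ := by
    rw [h1]; exact ENNReal.ofReal_ne_top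
  have hfin2 : (volume.withDensity D) (W₂ \ W₁) ≠ ⊤ := ne_top_of_le_ne_top h2top h2
  calc ((volume.withDensity D) (W₁ ∪ W₂)).toReal
      ≤ ((volume.withDensity D) W₁ + (volume.withDensity D) (W₂ \ W₁)).toReal :=
        ENNReal.toReal_mono (ENNReal.add_ne_top.mpr ⟨hfin1, hfin2⟩) hsplit
    _ = gaussianQ (r₁ / σ) + ((volume.withDensity D) (W₂ \ W₁)).toReal := by
        rw [ENNReal.toReal_add hfin1 hfin2, h1, ENNReal.toReal_ofReal (gaussianQ_nonneg _)]
    _ ≤ gaussianQ (r₁ / σ) + θ / (2 * π) * Real.exp (-(r₂ ^ 2) / (2 * σ ^ 2)) := by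
        apply add_le_add_right
        have hmono := ENNReal.toReal_mono h2top h2
        rw [ENNReal.toReal_mul, ENNReal.toReal_ofReal hθ0,
          ENNReal.toReal_ofReal (by positivity)] at hmono
        calc ((volume.withDensity D) (W₂ \ W₁)).toReal
            ≤ θ * ((2 * π)⁻¹ * Real.exp (-r₂ ^ 2 / (2 * σ ^ 2))) := hmono
          _ = θ / (2 * π) * Real.exp (-(r₂ ^ 2) / (2 * σ ^ 2)) := by ring
end

section
/- Let ω ∈ ℝ₊ⁿ be nonzero, γ > 0, x₀ = γ·𝟙 the BPSK image of the zero vector, ω̄_virt = γ(𝟙 − 2ω_virt) with ω_virt = (‖ω‖₁/‖ω‖₂²)ω. Then the hyperplane {y ∈ ℝⁿ : ⟨ω, y⟩ = 0} is equidistant from x₀ and ω̄_virt; in particular the distance from x₀ to this hyperplane is γ√(w_p(ω)). -/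
open Finset

/-- The hyperplane `{y : ⟨ω, y⟩ = 0}` is equidistant from the BPSK image `x₀ = γ𝟙`
of the zero codeword and from `ω̄_virt`; the common distance is `γ√(w_p(ω))`.
The distance from a point `p` to the hyperplane is `|⟨ω, p⟩|/‖ω‖₂`. -/
theorem hyperplane_equidistant
    (n : ℕ) (γ : ℝ) (hγ : 0 < γ)
    (ω : Fin n → ℝ) (hω : ∀ i, 0 ≤ ω i) (hne : ω ≠ 0)
    (x₀ ωvirt ωbarvirt : Fin n → ℝ)
    (hx₀ : x₀ = fun _ => γ)
    (hvirt : ωvirt = fun i => ((∑ j, |ω j|) / (∑ j, ω j ^ 2)) * ω i)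
    (hbar : ωbarvirt = fun i => γ * (1 - 2 * ωvirt i)) :
    |∑ i, ω i * x₀ i| / Real.sqrt (∑ i, ω i ^ 2) =
        |∑ i, ω i * ωbarvirt i| / Real.sqrt (∑ i, ω i ^ 2) ∧
      |∑ i, ω i * x₀ i| / Real.sqrt (∑ i, ω i ^ 2) =
        γ * Real.sqrt ((∑ i, |ω i|) ^ 2 / (∑ i, ω i ^ 2)) := by
  have habs : ∀ i, |ω i| = ω i := fun i => abs_of_nonneg (hω i)
  have hS1 : (∑ j, |ω j|) = ∑ j, ω j := by simp [habs]
  have hS2pos : 0 < ∑ j, ω j ^ 2 := by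
    have h0 : ∀ i ∈ Finset.univ, (0:ℝ) ≤ ω i ^ 2 := fun i _ => sq_nonneg _
    rcases Function.ne_iff.mp hne with ⟨i, hi⟩
    exact Finset.sum_pos' h0 ⟨i, Finset.mem_univ i,
      pow_pos (lt_of_le_of_ne (hω i) (Ne.symm hi)) 2⟩
  have hx : (∑ i, ω i * x₀ i) = γ * ∑ i, ω i := by
    subst hx₀; rw [Finset.mul_sum]; exact Finset.sum_congr rfl fun i _ => mul_comm _ _
  have hb : (∑ i, ω i * ωbarvirt i) = -(γ * ∑ i, ω i) := by
    subst hbar hvirt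
    set c := (∑ j, |ω j|) / (∑ j, ω j ^ 2) with hc
    have key : (∑ i, ω i * (γ * (1 - 2 * (c * ω i)))) =
        γ * (∑ i, ω i) - 2 * γ * c * (∑ i, ω i ^ 2) := by
      rw [Finset.sum_congr rfl (fun i _ =>
        show ω i * (γ * (1 - 2 * (c * ω i))) = γ * ω i - 2 * γ * c * ω i ^ 2 by ring),
        Finset.sum_sub_distrib, ← Finset.mul_sum, ← Finset.mul_sum]
    rw [key, hc, hS1]
    field_simp
    ring
  constructor
  · rw [hx, hb, abs_neg]
  · rw [hx, hS1]
    have hSnn : 0 ≤ ∑ i, ω i := Finset.sum_nonneg fun i _ => hω i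
    rw [abs_of_nonneg (mul_nonneg hγ.le hSnn), Real.sqrt_div (sq_nonneg _),
      Real.sqrt_sq hSnn, mul_div_assoc]
end
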